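/- arXiv:2005.05245 — 8 statements merged into one kernel-verified Lean document; each statement's English description precedes it below -/
import Mathlib

section
/- Let T ∈ ℕ with T ≥ 1, c_κ ≥ 0, and let κ_j : ℕ → ℝ for j = 0,…,T−1 (with the convention κ_T := κ_0) be sequences satisfying κ_j(t+1) ≤ κ_{j+1}(t) − c_κ · Δκ(t) for all t and all j = 0,…,T−1, where κ(t) := Σ_{j=0}^{T−1} κ_j(t) and Δκ(t) := κ(t+1) − κ(t). Then for all t and all k = 0,…,T−1, κ_{T−1}(t+k+1) ≤ κ_k(t) − c_κ · Σ_{j=0}^{k} Δκ(t+j). -/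
/-- Recursive telescoping bound (eq. (15)) of Proposition 2: from the one-step
constraints `κ_j(t+1) ≤ κ_{j+1}(t) − c_κ Δκ(t)` (cyclic indices mod `T`) one gets
`κ_{T−1}(t+k+1) ≤ κ_k(t) − c_κ Σ_{j=0}^k Δκ(t+j)` for all `k < T`. -/
theorem stmt_1 (T : ℕ) (hT : 1 ≤ T) (cκ : ℝ) (hcκ : 0 ≤ cκ) (κ : ℕ → ℕ → ℝ)
    (κtot Δκ : ℕ → ℝ)
    (hκtot : ∀ t, κtot t = ∑ j ∈ Finset.range T, κ j t)
    (hΔ : ∀ t, Δκ t = κtot (t + 1) - κtot t)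
    (hrec : ∀ t, ∀ j < T, κ j (t + 1) ≤ κ ((j + 1) % T) t - cκ * Δκ t) :
    ∀ t, ∀ k < T,
      κ (T - 1) (t + k + 1) ≤ κ k t - cκ * ∑ j ∈ Finset.range (k + 1), Δκ (t + j) := by
  intro t k
  induction k generalizing t with
  | zero =>
    intro _
    have h := hrec t (T - 1) (Nat.sub_lt hT one_pos)
    have : (T - 1 + 1) % T = 0 := by
      rw [Nat.sub_add_cancel hT, Nat.mod_self]
    simpa [this] using h
  | succ k ih =>
    intro hk
    have hkT : k < T := Nat.lt_of_succ_lt hk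
    have h1 := ih (t + 1) hkT
    have h2 := hrec t k hkT
    have hmod : (k + 1) % T = k + 1 := Nat.mod_eq_of_lt hk
    rw [hmod] at h2
    have hsum : ∑ j ∈ Finset.range (k + 1 + 1), Δκ (t + j)
        = Δκ t + ∑ j ∈ Finset.range (k + 1), Δκ (t + 1 + j) := by
      rw [Finset.sum_range_succ' (fun j => Δκ (t + j))]
      simp [add_comm, add_assoc, add_left_comm]
    have : t + (k + 1) + 1 = t + 1 + k + 1 := by ring
    rw [this, hsum]
    calc κ (T - 1) (t + 1 + k + 1)
        ≤ κ k (t + 1) - cκ * ∑ j ∈ Finset.range (k + 1), Δκ (t + 1 + j) := h1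
      _ ≤ (κ (k + 1) t - cκ * Δκ t) - cκ * ∑ j ∈ Finset.range (k + 1), Δκ (t + 1 + j) := by
          linarith
      _ = κ (k + 1) t - cκ * (Δκ t + ∑ j ∈ Finset.range (k + 1), Δκ (t + 1 + j)) := by ring
end

section
/- Under the same assumptions as the previous recursion (κ_j(t+1) ≤ κ_{j+1}(t) − c_κΔκ(t) for j = 0,…,T−1, with κ(t) = Σ_j κ_j(t), Δκ(t) = κ(t+1) − κ(t), κ_T := κ_0, c_κ ≥ 0), one has for every t: Σ_{k=0}^{T−1} κ_{T−1}(t+1+k) ≤ κ(t) + c_κ·T·(κ(t) − κ(t+T)). -/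
lemma cyc_sum (n : ℕ) (f : ℕ → ℝ) :
    ∑ j ∈ Finset.range (n + 1), f ((j + 1) % (n + 1)) =
    ∑ j ∈ Finset.range (n + 1), f j := by
  rw [Finset.sum_range_succ, Finset.sum_range_succ' f n]
  have h1 : (n + 1) % (n + 1) = 0 := Nat.mod_self _
  rw [h1]
  congr 1
  apply Finset.sum_congr rfl
  intro j hj
  have : j + 1 < n + 1 := by
    have := Finset.mem_range.mp hj; omega
  rw [Nat.mod_eq_of_lt this]

/-- T-step summed bound in the proof of Proposition 2:
`Σ_{k=0}^{T−1} κ_{T−1}(t+1+k) ≤ κ(t) + c_κ·T·(κ(t) − κ(t+T))`. -/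
theorem stmt_2 (T : ℕ) (hT : 1 ≤ T) (cκ : ℝ) (hcκ : 0 ≤ cκ) (κ : ℕ → ℕ → ℝ)
    (κtot Δκ : ℕ → ℝ)
    (hκtot : ∀ t, κtot t = ∑ j ∈ Finset.range T, κ j t)
    (hΔ : ∀ t, Δκ t = κtot (t + 1) - κtot t)
    (hrec : ∀ t, ∀ j < T, κ j (t + 1) ≤ κ ((j + 1) % T) t - cκ * Δκ t) :
    ∀ t, ∑ k ∈ Finset.range T, κ (T - 1) (t + 1 + k) ≤
      κtot t + cκ * T * (κtot t - κtot (t + T)) := by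
  obtain ⟨n, rfl⟩ : ∃ n, T = n + 1 := ⟨T - 1, by omega⟩
  -- monotonicity of κtot
  have hmono1 : ∀ s, κtot (s + 1) ≤ κtot s := by
    intro s
    have hsum : ∑ j ∈ Finset.range (n + 1), κ j (s + 1) ≤
        ∑ j ∈ Finset.range (n + 1), (κ ((j + 1) % (n + 1)) s - cκ * Δκ s) :=
      Finset.sum_le_sum fun j hj => hrec s j (Finset.mem_range.mp hj)
    rw [Finset.sum_sub_distrib, cyc_sum n (fun j => κ j s)] at hsum
    have : κtot (s + 1) ≤ κtot s - (n + 1) * (cκ * Δκ s) := by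
      rw [hκtot, hκtot]
      simpa [Finset.sum_const, Finset.card_range] using hsum
    rw [hΔ s] at this
    nlinarith [mul_nonneg hcκ (le_of_lt (by positivity : (0:ℝ) < (n:ℝ) + 1))]
  have hmono : ∀ s m, κtot (s + m) ≤ κtot s := by
    intro s m
    induction m with
    | zero => simp
    | succ m ih => calc κtot (s + (m + 1)) = κtot ((s + m) + 1) := by ring_nf
                    _ ≤ κtot (s + m) := hmono1 _
                    _ ≤ κtot s := ih
  -- chained bound
  have hchain : ∀ k, k < n + 1 → ∀ t,
      κ n (t + 1 + k) ≤ κ k t - cκ * (κtot (t + k + 1) - κtot t) := by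
    intro k
    induction k with
    | zero =>
      intro _ t
      have h := hrec t n (Nat.lt_succ_self n)
      have : (n + 1) % (n + 1) = 0 := Nat.mod_self _
      rw [this, hΔ t] at h
      simpa using h
    | succ k ih =>
      intro hk t
      have hk' : k < n + 1 := by omega
      have h1 : κ n ((t + 1) + 1 + k) ≤ κ k (t + 1) - cκ * (κtot (t + 1 + k + 1) - κtot (t + 1)) :=
        ih hk' (t + 1)
      have h2 : κ k (t + 1) ≤ κ ((k + 1) % (n + 1)) t - cκ * Δκ t := hrec t k hk'
      have hmod : (k + 1) % (n + 1) = k + 1 := Nat.mod_eq_of_lt (by omega)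
      rw [hmod, hΔ t] at h2
      have heq : t + 1 + (k + 1) = (t + 1) + 1 + k := by omega
      have heq2 : t + 1 + k + 1 = t + (k + 1) + 1 := by omega
      rw [heq]
      rw [heq2] at h1
      nlinarith
  intro t
  have hsum : ∑ k ∈ Finset.range (n + 1), κ n (t + 1 + k) ≤
      ∑ k ∈ Finset.range (n + 1), (κ k t - cκ * (κtot (t + k + 1) - κtot t)) :=
    Finset.sum_le_sum fun k hk => hchain k (Finset.mem_range.mp hk) t
  have hsum2 : ∑ k ∈ Finset.range (n + 1), (κ k t - cκ * (κtot (t + k + 1) - κtot t)) ≤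
      κtot t + cκ * (n + 1) * (κtot t - κtot (t + (n + 1))) := by
    rw [Finset.sum_sub_distrib, ← hκtot t]
    have hterm : ∀ k ∈ Finset.range (n + 1),
        -(cκ * (κtot (t + k + 1) - κtot t)) ≤ cκ * (κtot t - κtot (t + (n + 1))) := by
      intro k hk
      have hkn : k < n + 1 := Finset.mem_range.mp hk
      have h3 : κtot (t + (n + 1)) ≤ κtot (t + k + 1) := by
        have := hmono (t + k + 1) (n - k)
        have heq : t + k + 1 + (n - k) = t + (n + 1) := by omega
        rwa [heq] at this
      nlinarith
    have := Finset.sum_le_sum hterm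
    rw [Finset.sum_const, Finset.card_range] at this
    have h4 : ∑ k ∈ Finset.range (n + 1), cκ * (κtot (t + k + 1) - κtot t) ≥
        -((n + 1) • (cκ * (κtot t - κtot (t + (n + 1))))) := by
      have := Finset.sum_le_sum hterm
      rw [Finset.sum_const, Finset.card_range, Finset.sum_neg_distrib] at this
      linarith
    rw [nsmul_eq_mul] at h4
    push_cast at h4 ⊢
    nlinarith
  have hfinal := le_trans hsum hsum2
  simpa using hfinal
end

section
/- Let T ≥ 1, and let ℓ : Fin T → ℝ be given (stage costs of a T-periodic reference r_T(0),…,r_T(T−1)), with J_T := Σ_{k=0}^{T−1} ℓ(k). Suppose V_f, V_f⁺ ∈ ℝ satisfy V_f⁺ − V_f ≤ −ℓ_x + ℓ(0), where ℓ_x ∈ ℝ is an arbitrary real number (the stage cost at the current state). Define Ṽ_f := V_f + Σ_{k=0}^{T−2} ((T−1−k)/T)·ℓ(k) and Ṽ_f⁺ := V_f⁺ + Σ_{k=0}^{T−2} ((T−1−k)/T)·ℓ(k+1) (i.e., the same sum evaluated along the cyclically shifted reference). Then Ṽ_f⁺ − Ṽ_f ≤ −ℓ_x + J_T / T. -/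
lemma aux_sum (ℓ : ℕ → ℝ) : ∀ n : ℕ,
    ∑ k ∈ Finset.range n, ((n : ℝ) - k) * (ℓ (k + 1) - ℓ k)
      = ∑ k ∈ Finset.range (n + 1), ℓ k - (n + 1) * ℓ 0 := by
  intro n
  induction n with
  | zero => simp
  | succ n ih =>
    have h1 : ∀ k ∈ Finset.range (n + 1),
        (((n : ℝ) + 1) - k) * (ℓ (k + 1) - ℓ k)
          = ((n : ℝ) - k) * (ℓ (k + 1) - ℓ k) + (ℓ (k + 1) - ℓ k) := by
      intro k _; ring
    rw [show ((n + 1 : ℕ) : ℝ) = (n : ℝ) + 1 from by norm_cast]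
    rw [Finset.sum_congr rfl h1, Finset.sum_add_distrib,
      Finset.sum_range_succ (fun k => ((n : ℝ) - k) * (ℓ (k + 1) - ℓ k)), ih,
      Finset.sum_range_sub (fun k => ℓ k), Finset.sum_range_succ _ (n + 1)]
    push_cast
    ring

/-- Lemma 6 of the paper (modified reference cost). -/
theorem stmt_5 (T : ℕ) (hT : 1 ≤ T) (ℓ : ℕ → ℝ) (Vf Vfp ℓx : ℝ)
    (hdec : Vfp - Vf ≤ -ℓx + ℓ 0) :
    (Vfp + ∑ k ∈ Finset.range (T - 1), (((T : ℝ) - 1 - k) / T) * ℓ (k + 1)) -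
        (Vf + ∑ k ∈ Finset.range (T - 1), (((T : ℝ) - 1 - k) / T) * ℓ k) ≤
      -ℓx + (∑ k ∈ Finset.range T, ℓ k) / T := by
  obtain ⟨n, rfl⟩ : ∃ n, T = n + 1 := ⟨T - 1, (Nat.succ_pred_eq_of_pos hT).symm⟩
  have hTpos : (0 : ℝ) < (n : ℝ) + 1 := by positivity
  have key := aux_sum ℓ n
  have hS : ∑ k ∈ Finset.range n, (((n + 1 : ℕ) : ℝ) - 1 - k) / ((n + 1 : ℕ)) * ℓ (k + 1)
      - ∑ k ∈ Finset.range n, (((n + 1 : ℕ) : ℝ) - 1 - k) / ((n + 1 : ℕ)) * ℓ k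
      = (∑ k ∈ Finset.range (n + 1), ℓ k) / ((n : ℝ) + 1) - ℓ 0 := by
    rw [← Finset.sum_sub_distrib]
    have : ∀ k ∈ Finset.range n,
        (((n + 1 : ℕ) : ℝ) - 1 - k) / ((n + 1 : ℕ)) * ℓ (k + 1)
          - (((n + 1 : ℕ) : ℝ) - 1 - k) / ((n + 1 : ℕ)) * ℓ k
          = ((n : ℝ) - k) * (ℓ (k + 1) - ℓ k) / ((n : ℝ) + 1) := by
      intro k _; push_cast; ring
    rw [Finset.sum_congr rfl this, ← Finset.sum_div, key]
    field_simp
  simp only [Nat.add_sub_cancel] at *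
  push_cast at hS ⊢
  linarith
end

section
/- Let α₁, α₃ ∈ K∞ (continuous, strictly increasing, unbounded functions ℝ≥0 → ℝ≥0 with value 0 at 0) and let α̲ > 0 and α ≥ α̲. Define Δα := min{α₁(α₃⁻¹(α̲/2)), α̲/2}. Then Δα > 0 and sup_{c ∈ [0, α]} (c − α₁(α₃⁻¹(c))) ≤ α − Δα. -/
/-- Class-K∞ function: continuous, strictly increasing, unbounded on `[0,∞)`,
vanishing at `0` (and nonnegative on `[0,∞)`). -/
def IsKInfty (f : ℝ → ℝ) : Prop :=
  ContinuousOn f (Set.Ici 0) ∧ StrictMonoOn f (Set.Ici 0) ∧ f 0 = 0 ∧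
    (∀ M : ℝ, ∃ x, 0 ≤ x ∧ M ≤ f x) ∧ (∀ x, 0 ≤ x → 0 ≤ f x)

/-- Strict-decrease estimate (eq. (13)) in the proof of Lemma 1. -/
theorem stmt_7 (α₁ α₃ α₃inv : ℝ → ℝ) (h1 : IsKInfty α₁) (h3 : IsKInfty α₃)
    (hinv1 : ∀ x, 0 ≤ x → α₃ (α₃inv x) = x)
    (hinv2 : ∀ x, 0 ≤ x → α₃inv (α₃ x) = x)
    (hinv3 : ∀ x, 0 ≤ x → 0 ≤ α₃inv x)
    (αlow α : ℝ) (hαlow : 0 < αlow) (hα : αlow ≤ α) :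
    0 < min (α₁ (α₃inv (αlow / 2))) (αlow / 2) ∧
      ∀ c ∈ Set.Icc (0 : ℝ) α,
        c - α₁ (α₃inv c) ≤ α - min (α₁ (α₃inv (αlow / 2))) (αlow / 2) := by
  obtain ⟨_, h1mono, h10, _, h1nn⟩ := h1
  obtain ⟨_, h3mono, h30, _, h3nn⟩ := h3
  have hhalf : 0 < αlow / 2 := by linarith
  -- α₃inv is monotone on nonnegatives
  have hinvmono : ∀ x y : ℝ, 0 ≤ x → x ≤ y → α₃inv x ≤ α₃inv y := by
    intro x y hx hxy
    by_contra hlt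
    push_neg at hlt
    have hy : (0:ℝ) ≤ y := hx.trans hxy
    have := h3mono (hinv3 y hy) (hinv3 x hx) hlt
    rw [hinv1 x hx, hinv1 y hy] at this
    linarith
  have hpos : 0 < α₃inv (αlow / 2) := by
    rcases lt_or_eq_of_le (hinv3 _ hhalf.le) with h | h
    · exact h
    · exfalso
      have := hinv1 (αlow / 2) hhalf.le
      rw [← h, h30] at this
      linarith
  have hΔ1 : 0 < α₁ (α₃inv (αlow / 2)) := by
    have := h1mono (Set.self_mem_Ici) hpos.le hpos
    rwa [h10] at this
  refine ⟨lt_min hΔ1 hhalf, ?_⟩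
  intro c ⟨hc0, hcα⟩
  set Δ := min (α₁ (α₃inv (αlow / 2))) (αlow / 2) with hΔ
  rcases le_or_gt c (αlow / 2) with hcase | hcase
  · have h1 : c - α₁ (α₃inv c) ≤ c := by
      have := h1nn _ (hinv3 c hc0); linarith
    have : Δ ≤ αlow / 2 := min_le_right _ _
    linarith
  · have hmono : α₁ (α₃inv (αlow / 2)) ≤ α₁ (α₃inv c) := by
      rcases lt_or_eq_of_le (hinvmono _ _ hhalf.le hcase.le) with h | h
      · exact (h1mono (hinv3 _ hhalf.le) (hinv3 _ hc0) h).le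
      · rw [h]
    have : Δ ≤ α₁ (α₃inv c) := (min_le_left _ _).trans hmono
    linarith
end

section
/- Let α₁, α₂, α₃, α₄, α₅ ∈ K∞, α̲ > 0, and consider abstract quantities v = V_δ(x, r, t) ∈ ℝ≥0 with v ≤ α(r) for a terminal-set size function α satisfying α(r) ∈ [α̲, ᾱ] and |α(r) − α(r̃)| ≤ α₅(‖r − r̃‖). Suppose the one-step value v⁺ := V_δ(x⁺, r⁺, t+1) satisfies v⁺ ≤ v − α₁(α₃⁻¹(v)), and that changing the reference costs at most continuity: V_δ(x⁺, r̃, t+1) ≤ v⁺ + α₄(‖r⁺ − r̃‖). Then with Δα := min{α₁(α₃⁻¹(α̲/2)), α̲/2} and ε := (α₄ + α₅)⁻¹(Δα), for every r̃ with ‖r⁺ − r̃‖ ≤ ε it holds that V_δ(x⁺, r̃, t+1) ≤ α(r̃). -/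
/-- Lemma 1 of the paper (invariance of the terminal sublevel set under small
reference changes), abstracted. -/
theorem stmt_8 {E : Type*} [NormedAddCommGroup E]
    (α₁ α₃ α₃inv α₄ α₅ εinv : ℝ → ℝ)
    (h1 : IsKInfty α₁) (h3 : IsKInfty α₃) (h4 : IsKInfty α₄) (h5 : IsKInfty α₅)
    (hinv1 : ∀ x, 0 ≤ x → α₃ (α₃inv x) = x) (hinv3 : ∀ x, 0 ≤ x → 0 ≤ α₃inv x)
    (hεinv1 : ∀ x, 0 ≤ x → α₄ (εinv x) + α₅ (εinv x) = x)
    (hεinv2 : ∀ x, 0 ≤ x → 0 ≤ εinv x)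
    (αlow αhigh : ℝ) (hαlow : 0 < αlow)
    (α : E → ℝ) (hαbd : ∀ r', α r' ∈ Set.Icc αlow αhigh)
    (hαcont : ∀ r' r'', |α r' - α r''| ≤ α₅ ‖r' - r''‖)
    (r rplus : E) (hαshift : α rplus = α r)
    (v vplus : ℝ) (hv0 : 0 ≤ v) (hvα : v ≤ α r)
    (hdec : vplus ≤ v - α₁ (α₃inv v))
    (Vnext : E → ℝ) (hVr : Vnext rplus = vplus)
    (hVcont : ∀ rt, Vnext rt ≤ vplus + α₄ ‖rplus - rt‖) :
    ∀ rt : E,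
      ‖rplus - rt‖ ≤ εinv (min (α₁ (α₃inv (αlow / 2))) (αlow / 2)) →
        Vnext rt ≤ α rt := by

  intro rt hrt
  obtain ⟨h1c, h1m, h1z, h1u, h1n⟩ := h1
  obtain ⟨h3c, h3m, h3z, h3u, h3n⟩ := h3
  obtain ⟨h4c, h4m, h4z, h4u, h4n⟩ := h4
  obtain ⟨h5c, h5m, h5z, h5u, h5n⟩ := h5
  set Δ := min (α₁ (α₃inv (αlow / 2))) (αlow / 2) with hΔdef
  have hhalf : (0:ℝ) ≤ αlow / 2 := by positivity
  have hΔ0 : 0 ≤ Δ := le_min (h1n _ (hinv3 _ hhalf)) hhalf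
  set ε := εinv Δ with hεdef
  have hε0 : 0 ≤ ε := hεinv2 _ hΔ0
  have hd0 : 0 ≤ ‖rplus - rt‖ := norm_nonneg _
  have h4mono : α₄ ‖rplus - rt‖ ≤ α₄ ε :=
    h4m.monotoneOn (Set.mem_Ici.2 hd0) (Set.mem_Ici.2 hε0) hrt
  have h5mono : α₅ ‖rplus - rt‖ ≤ α₅ ε :=
    h5m.monotoneOn (Set.mem_Ici.2 hd0) (Set.mem_Ici.2 hε0) hrt
  have hkey : vplus ≤ α r - Δ := by
    rcases le_or_gt v (αlow / 2) with hc | hc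
    · have h1nn : 0 ≤ α₁ (α₃inv v) := h1n _ (hinv3 _ hv0)
      have hαr : αlow ≤ α r := (hαbd r).1
      have hΔle : Δ ≤ αlow / 2 := min_le_right _ _
      linarith
    · have hmono3 : α₃inv (αlow / 2) ≤ α₃inv v := by
        by_contra h
        push_neg at h
        have := h3m (Set.mem_Ici.2 (hinv3 _ hv0)) (Set.mem_Ici.2 (hinv3 _ hhalf)) h
        rw [hinv1 _ hv0, hinv1 _ hhalf] at this
        linarith
      have h1le := h1m.monotoneOn (Set.mem_Ici.2 (hinv3 _ hhalf))
        (Set.mem_Ici.2 (hinv3 _ hv0)) hmono3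
      have hΔle : Δ ≤ α₁ (α₃inv v) := le_trans (min_le_left _ _) h1le
      linarith
  have hsum : α₄ ε + α₅ ε = Δ := hεinv1 _ hΔ0
  have hαrt : α r - α₅ ‖rplus - rt‖ ≤ α rt := by
    have h := hαcont rplus rt
    rw [hαshift] at h
    have h2 := (abs_le.1 h).2
    linarith
  have hV := hVcont rt
  linarith
end

section
/- Let T ≥ 1 and let A_0, …, A_{T−1} ∈ ℝ^{n×n}, and suppose there exist symmetric positive definite matrices P_0, …, P_T = P_0 ∈ ℝ^{n×n} and ε > 0 such that A_jᵀ P_{j+1} A_j − P_j ⪯ −ε·Iₙ for j = 0, …, T−1. Then the matrix Iₙ − (A_{T−1}·…·A_1·A_0)ᵀ is invertible, and consequently for every choice of vectors g_0, …, g_{T−1} ∈ ℝⁿ there exists a unique T-periodic solution p_0, …, p_{T−1} (with p_T := p_0) of the adjoint recursion A_jᵀ p_{j+1} = p_j − g_j, j = 0, …, T−1. -/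
open Matrix

/-- Part I of the proof of Proposition 4: the periodic Lyapunov inequality implies
invertibility of `I − Φᵀ` (monodromy matrix `Φ = A_{T−1}⋯A_0`), hence the periodic
adjoint recursion has a unique solution. -/
theorem stmt_11 (n T : ℕ) (hT : 0 < T) (A P : ℕ → Matrix (Fin n) (Fin n) ℝ)
    (hP : ∀ j ≤ T, (P j).PosDef) (hPT : P T = P 0) (ε : ℝ) (hε : 0 < ε)
    (hLyap : ∀ j < T,
      (P j - (A j)ᵀ * P (j + 1) * A j - ε • (1 : Matrix (Fin n) (Fin n) ℝ)).PosSemidef) :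
    IsUnit (1 - ((List.ofFn fun i : Fin T => A (T - 1 - (i : ℕ))).prod)ᵀ) ∧
      ∀ g : ℕ → (Fin n → ℝ), ∃! p : Fin T → (Fin n → ℝ),
        ∀ j : Fin T,
          (A (j : ℕ))ᵀ *ᵥ p ⟨((j : ℕ) + 1) % T, Nat.mod_lt _ hT⟩ = p j - g (j : ℕ) := by
  have hnn : ∀ w : Fin n → ℝ, 0 ≤ w ⬝ᵥ w := fun w =>
    Finset.sum_nonneg fun i _ => mul_self_nonneg _
  set M : ℕ → Matrix (Fin n) (Fin n) ℝ :=
    fun j => (List.ofFn fun i : Fin j => A (j - 1 - (i : ℕ))).prod with hMdef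
  have hM0 : M 0 = 1 := by simp [hMdef]
  have hMsucc : ∀ j, M (j + 1) = A j * M j := by
    intro j
    show (List.ofFn fun i : Fin (j + 1) => A (j + 1 - 1 - (i : ℕ))).prod
        = A j * (List.ofFn fun i : Fin j => A (j - 1 - (i : ℕ))).prod
    rw [List.ofFn_succ, List.prod_cons]
    have e3 : (fun i : Fin j => A (j + 1 - 1 - ((i.succ : Fin (j + 1)) : ℕ)))
        = fun i : Fin j => A (j - 1 - (i : ℕ)) := by
      funext i
      have hnat : j + 1 - 1 - ((i : ℕ) + 1) = j - 1 - (i : ℕ) := by omega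
      simp only [Fin.val_succ, hnat]
    have e0 : (j + 1 - 1 - ((0 : Fin (j + 1)) : ℕ)) = j := by simp
    rw [e3, e0]
  -- Part 1: det (1 - M T) ≠ 0
  have hdet : (1 - M T).det ≠ 0 := by
    intro hd
    obtain ⟨v, hv0, hv⟩ := (Matrix.exists_mulVec_eq_zero_iff).2 hd
    have hΦv : M T *ᵥ v = v := by
      rwa [sub_mulVec, one_mulVec, sub_eq_zero, eq_comm] at hv
    set x : ℕ → Fin n → ℝ := fun j => M j *ᵥ v with hx
    have hx0 : x 0 = v := by simp [hx, hM0]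
    have hxs : ∀ j, x (j + 1) = A j *ᵥ x j := by
      intro j; simp only [hx, hMsucc j, ← mulVec_mulVec]
    have hxT : x T = v := hΦv
    clear_value x
    clear hx
    have hstep : ∀ j < T,
        x (j+1) ⬝ᵥ (P (j+1) *ᵥ x (j+1)) + ε * (x j ⬝ᵥ x j) ≤ x j ⬝ᵥ (P j *ᵥ x j) := by
      intro j hj
      have h := (hLyap j hj).dotProduct_mulVec_nonneg (x j)
      have hexp : (P j - (A j)ᵀ * P (j + 1) * A j - ε • (1 : Matrix (Fin n) (Fin n) ℝ)) *ᵥ x j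
          = P j *ᵥ x j - (A j)ᵀ *ᵥ (P (j+1) *ᵥ (A j *ᵥ x j)) - ε • x j := by
        rw [sub_mulVec, sub_mulVec, smul_mulVec, one_mulVec, mulVec_mulVec, mulVec_mulVec]
      rw [hexp] at h
      simp only [star_trivial, dotProduct_sub, dotProduct_smul, smul_eq_mul] at h
      have hadj : x j ⬝ᵥ ((A j)ᵀ *ᵥ (P (j+1) *ᵥ (A j *ᵥ x j)))
          = (A j *ᵥ x j) ⬝ᵥ (P (j+1) *ᵥ (A j *ᵥ x j)) := by
        rw [dotProduct_mulVec, vecMul_transpose]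
      rw [hadj] at h
      rw [hxs j]
      linarith
    have hsum : ∀ k ≤ T,
        x k ⬝ᵥ (P k *ᵥ x k) + ε * ∑ i ∈ Finset.range k, (x i ⬝ᵥ x i)
          ≤ x 0 ⬝ᵥ (P 0 *ᵥ x 0) := by
      intro k hk
      induction k with
      | zero => simp
      | succ k ih =>
        have hk' : k < T := hk
        have := hstep k hk'
        have ihk := ih (le_of_lt hk')
        rw [Finset.sum_range_succ]
        linarith
    have hfin := hsum T le_rfl
    rw [hxT, hx0, hPT] at hfin
    have hsum0 : ∑ i ∈ Finset.range T, (x i ⬝ᵥ x i) ≤ 0 := by nlinarith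
    have hterm : v ⬝ᵥ v ≤ ∑ i ∈ Finset.range T, (x i ⬝ᵥ x i) := by
      have := Finset.single_le_sum (f := fun i => x i ⬝ᵥ x i)
        (fun i _ => hnn (x i)) (Finset.mem_range.2 hT)
      simpa [hx0] using this
    have : v ⬝ᵥ v = 0 := le_antisymm (by linarith) (hnn v)
    exact hv0 (dotProduct_self_eq_zero.1 this)
  have hUnit : IsUnit (1 - (M T)ᵀ) := by
    rw [Matrix.isUnit_iff_isUnit_det]
    have h : (1 - (M T)ᵀ) = (1 - M T)ᵀ := by rw [transpose_sub, transpose_one]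
    rw [h, det_transpose]
    exact isUnit_iff_ne_zero.2 hdet
  refine ⟨hUnit, ?_⟩
  -- the linear endomorphism
  set L : (Fin T → Fin n → ℝ) →ₗ[ℝ] (Fin T → Fin n → ℝ) :=
    { toFun := fun p j => p j - (A (j : ℕ))ᵀ *ᵥ p ⟨((j : ℕ) + 1) % T, Nat.mod_lt _ hT⟩
      map_add' := by
        intro p q; funext j; simp [mulVec_add]; abel
      map_smul' := by
        intro c p; funext j; simp [mulVec_smul, smul_sub] } with hL
  have hLapp : ∀ p j, L p j
      = p j - (A (j : ℕ))ᵀ *ᵥ p ⟨((j : ℕ) + 1) % T, Nat.mod_lt _ hT⟩ := fun _ _ => rfl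
  have hinj : Function.Injective L := by
    rw [injective_iff_map_eq_zero]
    intro p hp
    have hrec : ∀ j : Fin T,
        p j = (A (j : ℕ))ᵀ *ᵥ p ⟨((j : ℕ) + 1) % T, Nat.mod_lt _ hT⟩ := by
      intro j
      have h := congrFun hp j
      rw [hLapp] at h
      have : p j - (A (j : ℕ))ᵀ *ᵥ p ⟨((j : ℕ) + 1) % T, Nat.mod_lt _ hT⟩ = 0 := h
      rwa [sub_eq_zero] at this
    set q : ℕ → Fin n → ℝ := fun j => p ⟨j % T, Nat.mod_lt _ hT⟩ with hq
    have hqrec : ∀ j < T, q j = (A j)ᵀ *ᵥ q (j + 1) := by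
      intro j hj
      have h := hrec ⟨j, hj⟩
      simpa [hq, Nat.mod_eq_of_lt hj] using h
    have hchain : ∀ k ≤ T, q 0 = (M k)ᵀ *ᵥ q k := by
      intro k hk
      induction k with
      | zero => simp [hM0]
      | succ k ih =>
        have hk' : k < T := hk
        rw [ih (le_of_lt hk'), hqrec k hk', hMsucc, transpose_mul, ← mulVec_mulVec]
    have hqT : q T = q 0 := by simp [hq, Nat.mod_self]
    have hq0 : q 0 = 0 := by
      have h1 : (1 - (M T)ᵀ) *ᵥ q 0 = 0 := by
        rw [sub_mulVec, one_mulVec, sub_eq_zero]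
        conv_lhs => rw [hchain T le_rfl, hqT]
      have h2 : (1 - (M T)ᵀ)⁻¹ * (1 - (M T)ᵀ) = 1 :=
        Matrix.nonsing_inv_mul _ ((Matrix.isUnit_iff_isUnit_det _).1 hUnit)
      have h3 : (1 - (M T)ᵀ)⁻¹ *ᵥ ((1 - (M T)ᵀ) *ᵥ q 0) = (1 - (M T)ᵀ)⁻¹ *ᵥ 0 := by rw [h1]
      rwa [mulVec_mulVec, h2, one_mulVec, mulVec_zero] at h3
    have hall : ∀ k ≤ T, q (T - k) = 0 := by
      intro k hk
      induction k with
      | zero => simpa using hqT.trans hq0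
      | succ k ih =>
        have h1 : T - (k + 1) < T := by omega
        have h2 : T - (k + 1) + 1 = T - k := by omega
        rw [hqrec _ h1, h2, ih (by omega), mulVec_zero]
    funext j
    have hpq : p j = q (j : ℕ) := by
      simp [hq, Nat.mod_eq_of_lt j.isLt]
    have h3 : (j : ℕ) = T - (T - (j : ℕ)) := by omega
    have h4 := hall (T - (j : ℕ)) (by omega)
    rw [← h3] at h4
    rw [hpq, h4]
    rfl
  have hsurj : Function.Surjective L := (LinearMap.injective_iff_surjective).1 hinj
  intro g
  obtain ⟨p, hp⟩ := hsurj (fun j => g (j : ℕ))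
  refine ⟨p, ?_, ?_⟩
  · intro j
    have h := congrFun hp j
    rw [hLapp] at h
    rw [← h]; abel
  · intro p' hp'
    apply hinj
    rw [hp]
    funext j
    rw [hLapp, hp' j]; abel
end

section
/- Let T ≥ 1, A_0, …, A_{T−1} ∈ ℝ^{n×n} with monodromy matrix Φ := A_{T−1}⋯A_1·A_0 such that I − Φᵀ is invertible, and let g_0, …, g_{T−1} ∈ ℝⁿ. Define Ā(k) := A_{k−1}⋯A_0 for k ≥ 1 and Ā(0) := I. Then a vector p_0 ∈ ℝⁿ extends to a solution (p_0, …, p_{T−1}, p_T = p_0) of the recursion A_jᵀ p_{j+1} = p_j − g_j (j = 0, …, T−1) if and only if (I − Ā(T)ᵀ)·p_0 = Σ_{j=0}^{T−1} Ā(j)ᵀ·g_j. -/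
open Matrix

/-- Compressed adjoint equation (Remark 4, eq. (30)): `p_0` extends to a `T`-periodic
solution of the adjoint recursion iff `(I − Ā(T)ᵀ) p_0 = Σ_{j<T} Ā(j)ᵀ g_j`. -/
theorem stmt_12 (n T : ℕ) (hT : 0 < T) (A : ℕ → Matrix (Fin n) (Fin n) ℝ)
    (g : ℕ → (Fin n → ℝ)) (Abar : ℕ → Matrix (Fin n) (Fin n) ℝ)
    (hAbar : ∀ k, Abar k = (List.ofFn fun i : Fin k => A (k - 1 - (i : ℕ))).prod)
    (hinv : IsUnit (1 - (Abar T)ᵀ)) (p0 : Fin n → ℝ) :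
    (∃ p : ℕ → (Fin n → ℝ), p 0 = p0 ∧ p T = p0 ∧
        ∀ j < T, (A j)ᵀ *ᵥ p (j + 1) = p j - g j) ↔
      (1 - (Abar T)ᵀ) *ᵥ p0 = ∑ j ∈ Finset.range T, (Abar j)ᵀ *ᵥ g j := by
  have hAbar0 : Abar 0 = 1 := by simp [hAbar]
  have hAbarS : ∀ k, Abar (k + 1) = A k * Abar k := by
    intro k
    rw [hAbar, hAbar, List.ofFn_succ, List.prod_cons]
    have h1 : A (k + 1 - 1 - ((0 : Fin (k + 1)) : ℕ)) = A k := by norm_num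
    have h2 : (List.ofFn fun i : Fin k => A (k + 1 - 1 - ((i.succ : Fin (k + 1)) : ℕ)))
        = List.ofFn fun i : Fin k => A (k - 1 - (i : ℕ)) := by
      apply congrArg
      funext i
      have : k + 1 - 1 - ((i.succ : Fin (k + 1)) : ℕ) = k - 1 - (i : ℕ) := by
        simp only [Fin.val_succ]
        omega
      rw [this]
    rw [h1, h2]
  constructor
  · rintro ⟨p, hp0, hpT, hrec⟩
    have key : ∀ j ≤ T, (Abar j)ᵀ *ᵥ p j =
        p0 - ∑ i ∈ Finset.range j, (Abar i)ᵀ *ᵥ g i := by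
      intro j
      induction j with
      | zero => intro _; simp [hAbar0, hp0]
      | succ j ih =>
        intro hj
        have hjT : j < T := hj
        rw [hAbarS, transpose_mul, ← mulVec_mulVec, hrec j hjT, mulVec_sub, ih hjT.le,
          Finset.sum_range_succ]
        abel
    have h := key T le_rfl
    rw [hpT] at h
    rw [sub_mulVec, one_mulVec, h, sub_sub_cancel]
  · intro h
    set q : ℕ → Fin n → ℝ :=
      fun k => Nat.rec p0 (fun k qk => (A (T - (k + 1)))ᵀ *ᵥ qk + g (T - (k + 1))) k with hqdef
    have hqS : ∀ k, q (k + 1) = (A (T - (k + 1)))ᵀ *ᵥ q k + g (T - (k + 1)) := fun k => rfl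
    have key : ∀ j ≤ T, q T = (Abar j)ᵀ *ᵥ q (T - j) +
        ∑ i ∈ Finset.range j, (Abar i)ᵀ *ᵥ g i := by
      intro j
      induction j with
      | zero => intro _; simp [hAbar0]
      | succ j ih =>
        intro hj
        have h1 : T - j = (T - (j + 1)) + 1 := by omega
        have h2 : T - (T - (j + 1) + 1) = j := by omega
        rw [ih (by omega), h1, hqS, h2, mulVec_add, mulVec_mulVec, Finset.sum_range_succ,
          hAbarS, transpose_mul]
        abel
    have hqT : q T = p0 := by
      have := key T le_rfl
      rw [Nat.sub_self] at this
      have hq0 : q 0 = p0 := rfl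
      rw [hq0, ← h, sub_mulVec, one_mulVec] at this
      rw [this]
      abel
    refine ⟨fun j => q (T - j), hqT, by show q (T - T) = p0; rw [Nat.sub_self]; rfl, ?_⟩
    intro j hj
    show (A j)ᵀ *ᵥ q (T - (j + 1)) = q (T - j) - g j
    have h1 : T - j = (T - (j + 1)) + 1 := by omega
    have h2 : T - (T - (j + 1) + 1) = j := by omega
    rw [h1, hqS, h2]
    abel
end

section
/- Let P, P⁺ ∈ ℝ^{n×n} be symmetric, Q ∈ ℝ^{n×n} symmetric, A ∈ ℝ^{n×n}, ε̃ > 0, with Aᵀ P⁺ A − P ⪯ −Q − ε̃·Iₙ. Let Φ : ℝⁿ → ℝⁿ satisfy ‖Φ(d)‖ ≤ L·‖d‖ for all d with ‖d‖_P² ≤ α, for a constant L ≥ 0. Then for L sufficiently small (explicitly, whenever 2L·‖P⁺‖·‖A‖ + L²·‖P⁺‖ ≤ ε̃), every d with ‖d‖_P² ≤ α satisfies ‖A·d + Φ(d)‖_{P⁺}² − ‖d‖_P² ≤ −‖d‖_Q², where ‖v‖_M² := vᵀ M v. -/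
open scoped InnerProductSpace

/-- Local nonlinear Lyapunov decrease estimate (eq. (28)) in the proof of Proposition 4,
with matrices represented as linear operators on Euclidean space (so that `‖·‖` is the
spectral norm). -/
theorem stmt_14 {n : ℕ}
    (P Pp Q A : EuclideanSpace ℝ (Fin n) →L[ℝ] EuclideanSpace ℝ (Fin n))
    (hPsym : ∀ x y, ⟪P x, y⟫_ℝ = ⟪x, P y⟫_ℝ)
    (hPpsym : ∀ x y, ⟪Pp x, y⟫_ℝ = ⟪x, Pp y⟫_ℝ)
    (hQsym : ∀ x y, ⟪Q x, y⟫_ℝ = ⟪x, Q y⟫_ℝ)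
    (εt : ℝ) (hεt : 0 < εt)
    (hLyap : ∀ h, ⟪A h, Pp (A h)⟫_ℝ - ⟪h, P h⟫_ℝ ≤ -⟪h, Q h⟫_ℝ - εt * ‖h‖ ^ 2)
    (Φ : EuclideanSpace ℝ (Fin n) → EuclideanSpace ℝ (Fin n))
    (L α : ℝ) (hL0 : 0 ≤ L)
    (hΦ : ∀ d, ⟪d, P d⟫_ℝ ≤ α → ‖Φ d‖ ≤ L * ‖d‖)
    (hLsmall : 2 * L * ‖Pp‖ * ‖A‖ + L ^ 2 * ‖Pp‖ ≤ εt) :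
    ∀ d, ⟪d, P d⟫_ℝ ≤ α →
      ⟪A d + Φ d, Pp (A d + Φ d)⟫_ℝ - ⟪d, P d⟫_ℝ ≤ -⟪d, Q d⟫_ℝ := by
  intro d hd
  have hΦd := hΦ d hd
  have hnd : (0:ℝ) ≤ ‖d‖ := norm_nonneg d
  have hnΦ : (0:ℝ) ≤ ‖Φ d‖ := norm_nonneg _
  have hPp0 : (0:ℝ) ≤ ‖Pp‖ := norm_nonneg _
  have hAd : ‖A d‖ ≤ ‖A‖ * ‖d‖ := A.le_opNorm d
  -- expand inner product
  have expand : ⟪A d + Φ d, Pp (A d + Φ d)⟫_ℝ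
      = ⟪A d, Pp (A d)⟫_ℝ + 2 * ⟪Φ d, Pp (A d)⟫_ℝ + ⟪Φ d, Pp (Φ d)⟫_ℝ := by
    have h1 : ⟪A d, Pp (Φ d)⟫_ℝ = ⟪Φ d, Pp (A d)⟫_ℝ := by
      rw [← hPpsym, real_inner_comm]
    simp only [map_add, inner_add_left, inner_add_right, h1]
    ring
  have cross : ⟪Φ d, Pp (A d)⟫_ℝ ≤ L * ‖Pp‖ * ‖A‖ * ‖d‖ ^ 2 := by
    calc ⟪Φ d, Pp (A d)⟫_ℝ ≤ ‖Φ d‖ * ‖Pp (A d)‖ := real_inner_le_norm _ _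
      _ ≤ (L * ‖d‖) * (‖Pp‖ * (‖A‖ * ‖d‖)) := by
          apply mul_le_mul hΦd _ (norm_nonneg _) (by positivity)
          calc ‖Pp (A d)‖ ≤ ‖Pp‖ * ‖A d‖ := Pp.le_opNorm _
            _ ≤ ‖Pp‖ * (‖A‖ * ‖d‖) := by nlinarith
      _ = L * ‖Pp‖ * ‖A‖ * ‖d‖ ^ 2 := by ring
  have quad : ⟪Φ d, Pp (Φ d)⟫_ℝ ≤ L ^ 2 * ‖Pp‖ * ‖d‖ ^ 2 := by
    calc ⟪Φ d, Pp (Φ d)⟫_ℝ ≤ ‖Φ d‖ * ‖Pp (Φ d)‖ := real_inner_le_norm _ _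
      _ ≤ ‖Φ d‖ * (‖Pp‖ * ‖Φ d‖) := by
          exact mul_le_mul_of_nonneg_left (Pp.le_opNorm _) hnΦ
      _ = ‖Pp‖ * ‖Φ d‖ ^ 2 := by ring
      _ ≤ ‖Pp‖ * (L * ‖d‖) ^ 2 := by nlinarith [mul_le_mul hΦd hΦd hnΦ (by positivity : (0:ℝ) ≤ L * ‖d‖)]
      _ = L ^ 2 * ‖Pp‖ * ‖d‖ ^ 2 := by ring
  have hL := hLyap d
  have hsmall : (2 * L * ‖Pp‖ * ‖A‖ + L ^ 2 * ‖Pp‖) * ‖d‖ ^ 2 ≤ εt * ‖d‖ ^ 2 :=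
    mul_le_mul_of_nonneg_right hLsmall (by positivity)
  nlinarith [expand, cross, quad]
end
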